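/- Let p be a prime and let H = ⟨a, b; a⁻¹ba = b^{1+p}, a^p = 1, b^{p²} = 1⟩, a group of order p³. Then the HNN-extension H* = (H, t; t⁻¹at = b^p), with associated cyclic subgroups A = ⟨a⟩ and B = ⟨b^p⟩ and isomorphism sending a to b^p, is not residually a finite p-group. -/

import Mathlib

/-- A group `X` is *residually a finite p-group* if every non-identity element is excluded
by some normal subgroup of `p`-power index. -/
def ResiduallyPGroup (p : ℕ) (X : Type*) [Group X] : Prop :=
  ∀ x : X, x ≠ 1 → ∃ N : Subgroup X, N.Normal ∧ x ∉ N ∧ ∃ k : ℕ, N.index = p ^ k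

/-- The relators `a⁻¹ba·b⁻⁽¹⁺ᵖ⁾`, `aᵖ`, `b^{p²}` of the nonabelian group of order `p³`,
with `a = FreeGroup.of 0` and `b = FreeGroup.of 1`. -/
def mpRels (p : ℕ) : Set (FreeGroup (Fin 2)) :=
  {(FreeGroup.of 0)⁻¹ * FreeGroup.of 1 * FreeGroup.of 0 * ((FreeGroup.of 1) ^ (1 + p))⁻¹,
   (FreeGroup.of 0) ^ p, (FreeGroup.of 1) ^ (p ^ 2)}

/-- The group `H = ⟨a, b; a⁻¹ba = b^{1+p}, aᵖ = 1, b^{p²} = 1⟩` of order `p³`. -/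
def MpGroup (p : ℕ) : Type := PresentedGroup (mpRels p)

instance (p : ℕ) : Group (MpGroup p) := by delta MpGroup; infer_instance

/-- The generator `a` of `MpGroup p`. -/
def MpGroup.a (p : ℕ) : MpGroup p := PresentedGroup.of (0 : Fin 2)

/-- The generator `b` of `MpGroup p`. -/
def MpGroup.b (p : ℕ) : MpGroup p := PresentedGroup.of (1 : Fin 2)

lemma mpGroup_a_ne_one (p : ℕ) (hp : p.Prime) : MpGroup.a p ≠ 1 := by
  haveI : Fact p.Prime := ⟨hp⟩
  have hf : ∀ r ∈ mpRels p,
      FreeGroup.lift (![Multiplicative.ofAdd (1 : ZMod p), 1]) r = 1 := by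
    intro r hr
    rcases hr with h | h | h
    · subst h
      simp
    · subst h
      simp only [FreeGroup.lift_apply_of, map_pow]
      show (Multiplicative.ofAdd (1 : ZMod p)) ^ p = 1
      rw [← ofAdd_nsmul]
      simp
    · rw [Set.mem_singleton_iff] at h
      subst h
      simp
  intro h
  have h2 : Multiplicative.ofAdd (1 : ZMod p) = 1 := by
    have hx : PresentedGroup.toGroup hf (MpGroup.a p) = Multiplicative.ofAdd (1 : ZMod p) :=
      PresentedGroup.toGroup.of hf
    have h3 := congrArg (PresentedGroup.toGroup hf) h
    exact hx.symm.trans (h3.trans (map_one (PresentedGroup.toGroup hf)))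
  have : (1 : ZMod p) = 0 := by
    simpa using congrArg Multiplicative.toAdd h2
  exact one_ne_zero this

lemma mpGroup_rel (p : ℕ) :
    (MpGroup.a p)⁻¹ * MpGroup.b p * MpGroup.a p = MpGroup.b p ^ (1 + p) := by
  have h : PresentedGroup.mk (mpRels p)
      ((FreeGroup.of 0)⁻¹ * FreeGroup.of (1 : Fin 2) * FreeGroup.of 0 *
        ((FreeGroup.of 1) ^ (1 + p))⁻¹) = 1 := by
    apply (QuotientGroup.eq_one_iff _).2
    exact Subgroup.subset_normalClosure (Or.inl rfl)
  have h2 : (MpGroup.a p)⁻¹ * MpGroup.b p * MpGroup.a p * (MpGroup.b p ^ (1 + p))⁻¹ = 1 := by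
    have h' := h
    simp only [map_mul, map_inv, map_pow] at h'
    exact h'
  group at h2 ⊢
  have h3 := mul_eq_one_iff_eq_inv.mp h2
  rw [h3]
  group


/-- **Example.** Let `p` be a prime and `H = ⟨a, b; a⁻¹ba = b^{1+p}, aᵖ = 1, b^{p²} = 1⟩`
(a group of order `p³`). The HNN-extension `H* = (H, t; t⁻¹at = bᵖ)`, with associated cyclic
subgroups `A = ⟨a⟩`, `B = ⟨bᵖ⟩` and isomorphism sending `a` to `bᵖ`, is not residually a
finite `p`-group. -/
theorem mpGroup_hnn_not_residually_p
    (p : ℕ) (hp : p.Prime)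
    (φ : Subgroup.zpowers (MpGroup.a p) ≃* Subgroup.zpowers (MpGroup.b p ^ p))
    (hφ : (φ ⟨MpGroup.a p, Subgroup.mem_zpowers _⟩ : MpGroup p) = MpGroup.b p ^ p) :
    ¬ ResiduallyPGroup p
        (HNNExtension (MpGroup p) (Subgroup.zpowers (MpGroup.a p))
          (Subgroup.zpowers (MpGroup.b p ^ p)) φ) := by
  haveI : Fact p.Prime := ⟨hp⟩
  set G := HNNExtension (MpGroup p) (Subgroup.zpowers (MpGroup.a p))
    (Subgroup.zpowers (MpGroup.b p ^ p)) φ with hG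
  intro hres
  -- the witness element
  have hx1 : (HNNExtension.of (MpGroup.a p) : G) ≠ 1 := by
    intro h
    exact mpGroup_a_ne_one p hp (HNNExtension.of_injective (φ := φ) (by simpa using h))
  obtain ⟨N, hN, hxN, k, hk⟩ := hres (HNNExtension.of (MpGroup.a p)) hx1
  haveI := hN
  -- the quotient is a finite p-group
  have hcard : Nat.card (G ⧸ N) = p ^ k := hk
  haveI : Finite (G ⧸ N) :=
    Nat.finite_of_card_ne_zero (by rw [hcard]; exact pow_ne_zero k hp.pos.ne')
  have hpq : IsPGroup p (G ⧸ N) := IsPGroup.of_card hcard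
  haveI : Group.IsNilpotent (G ⧸ N) := hpq.isNilpotent
  set π : G →* G ⧸ N := QuotientGroup.mk' N with hπ
  set A : G ⧸ N := π (HNNExtension.of (MpGroup.a p)) with hA
  set B : G ⧸ N := π (HNNExtension.of (MpGroup.b p)) with hB
  set T : G ⧸ N := π HNNExtension.t with hT
  -- the two relations in the quotient
  have hrel1 : B⁻¹ * A⁻¹ * B * A = B ^ p := by
    have h := mpGroup_rel p
    have : A⁻¹ * B * A = B ^ (1 + p) := by
      rw [hA, hB, ← map_inv, ← map_mul, ← map_mul, ← map_inv, ← map_mul, ← map_mul,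
        ← map_pow, ← map_pow, h]
    calc B⁻¹ * A⁻¹ * B * A = B⁻¹ * (A⁻¹ * B * A) := by group
    _ = B⁻¹ * B ^ (1 + p) := by rw [this]
    _ = B ^ p := by rw [pow_add]; group
  have hrel2 : A = T⁻¹ * B ^ p * T := by
    have h := HNNExtension.equiv_eq_conj (φ := φ) ⟨MpGroup.a p, Subgroup.mem_zpowers _⟩
    rw [hφ] at h
    -- h : of (b^p) = t * of a * t⁻¹
    have h2 : (HNNExtension.of (MpGroup.a p) : G) =
        HNNExtension.t⁻¹ * HNNExtension.of (MpGroup.b p ^ p) * HNNExtension.t := by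
      rw [h]; group
    rw [hA, h2]
    simp only [map_mul, map_inv, map_pow, hB, hT]
  -- A is in every term of the lower central series
  open commutatorElement in
  have key : ∀ n, A ∈ (⊤ : Subgroup (G ⧸ N)).lowerCentralSeries n := by
    intro n
    induction n with
    | zero => exact Subgroup.mem_top A
    | succ n ih =>
      have hc : ⁅A⁻¹, B⁻¹⁆ ∈ (⊤ : Subgroup (G ⧸ N)).lowerCentralSeries (n + 1) :=
        Subgroup.commutator_mem_commutator (Subgroup.inv_mem _ ih) (Subgroup.mem_top _)
      have hc2 : ⁅B⁻¹, A⁻¹⁆ ∈ (⊤ : Subgroup (G ⧸ N)).lowerCentralSeries (n + 1) := by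
        have : ⁅B⁻¹, A⁻¹⁆ = ⁅A⁻¹, B⁻¹⁆⁻¹ := (commutatorElement_inv A⁻¹ B⁻¹).symm
        rw [this]
        exact Subgroup.inv_mem _ hc
      have hBp : B ^ p ∈ (⊤ : Subgroup (G ⧸ N)).lowerCentralSeries (n + 1) := by
        have : ⁅B⁻¹, A⁻¹⁆ = B ^ p := by
          rw [commutatorElement_def]
          simpa using hrel1
        rwa [this] at hc2
      rw [hrel2]
      have := (Subgroup.lowerCentralSeries_normal ⊤ (n + 1)).conj_mem (B ^ p) hBp T⁻¹
      simpa [mul_assoc] using this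
  obtain ⟨n, hn⟩ := Subgroup.nilpotent_iff_lowerCentralSeries.mp ‹Group.IsNilpotent (G ⧸ N)›
  have hA1 : A = 1 := by
    have := key n
    rw [hn] at this
    simpa using this
  exact hxN ((QuotientGroup.eq_one_iff _).mp hA1)
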